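/- Let γ be a path in [n]×[k] with k ≥ 1, write γ(i) = (a_i, b_i), and let r be the largest index with b_r = 0 (so γ(i) = (i,0) for all i ≤ r). Define γ̃ : [n+k−1] → [n]×[k−1] by γ̃(t) = (t, 0) for t ≤ r and γ̃(t) = (a_{t+1}, b_{t+1} − 1) for t > r. Then γ̃ is a path in [n]×[k−1], and for all (i,j) ∈ [n+k]×[k−1] one has E_γ(i, j+1) = (id × d_0)(E_{γ̃}(s_r(i), j)), where s_r : [n+k] → [n+k−1] is the degeneracy identifying r and r+1 and d_0 : [k−1] → [k] is the map y ↦ y+1. -/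

import Mathlib

/-- `γ` is a path in `[n] × [k]` (a simplex of maximal dimension of `Δⁿ × Δᵏ`):
it starts at `(0,0)`, ends at `(n,k)`, and each step increases exactly one
coordinate by exactly `1`.  The parameter `m` records the length of the path;
necessarily `m = n + k`. -/
def IsPath (n k m : ℕ) (γ : Fin (m + 1) → Fin (n + 1) × Fin (k + 1)) : Prop :=
  γ 0 = (0, 0) ∧
  γ (Fin.last m) = (Fin.last n, Fin.last k) ∧
  ∀ i : Fin m,
    (((γ i.succ).1 : ℕ) = ((γ i.castSucc).1 : ℕ) + 1 ∧ (γ i.succ).2 = (γ i.castSucc).2) ∨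
    ((γ i.succ).1 = (γ i.castSucc).1 ∧ ((γ i.succ).2 : ℕ) = ((γ i.castSucc).2 : ℕ) + 1)

/-- The extension `E_γ : [n+k] × [k] → [n] × [k]` of a path `γ`, given by
`E_γ(i, j) = (a_i, max (b_i) j)` where `γ i = (a_i, b_i)`. -/
def pathExt (n k m : ℕ) (γ : Fin (m + 1) → Fin (n + 1) × Fin (k + 1)) :
    Fin (m + 1) × Fin (k + 1) → Fin (n + 1) × Fin (k + 1) :=
  fun p => ((γ p.1).1, max (γ p.1).2 p.2)

/-- The strict order on paths: `γ₁ < γ₂` if at the least index `s` where they differ the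
first coordinate of `γ₁ s` is smaller than that of `γ₂ s`. -/
def pathLT (n k m : ℕ) (γ₁ γ₂ : Fin (m + 1) → Fin (n + 1) × Fin (k + 1)) : Prop :=
  ∃ s : Fin (m + 1), γ₁ s ≠ γ₂ s ∧ (∀ t : Fin (m + 1), t < s → γ₁ t = γ₂ t) ∧
    (γ₁ s).1 < (γ₂ s).1

/-- Let `γ` be a path in `[n] × [k+1]`, write `γ i = (a_i, b_i)`, and let `r` be the largest
index with `b_r = 0`.  Define `γ̃ : [n+k] → [n] × [k]` by `γ̃ t = (t, 0)` for `t ≤ r` and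
`γ̃ t = (a_{t+1}, b_{t+1} - 1)` for `t > r`.  Then `γ̃` is a path in `[n] × [k]`, and for all
`(i, j)` one has `E_γ (i, j+1) = (id × d₀) (E_{γ̃} (s_r i, j))`. -/
theorem pathExt_strip_first_row (n k : ℕ)
    (γ : Fin (n + k + 2) → Fin (n + 1) × Fin (k + 2))
    (hγ : IsPath n (k + 1) (n + k + 1) γ)
    (r : Fin (n + k + 1))
    (hr0 : (γ r.castSucc).2 = 0)
    (hrmax : ∀ t : Fin (n + k + 2), (γ t).2 = 0 → (t : ℕ) ≤ (r : ℕ)) :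
    ∃ γt : Fin (n + k + 1) → Fin (n + 1) × Fin (k + 1),
      (∀ t : Fin (n + k + 1), (t : ℕ) ≤ (r : ℕ) →
        ((γt t).1 : ℕ) = (t : ℕ) ∧ (γt t).2 = 0) ∧
      (∀ t : Fin (n + k + 1), (r : ℕ) < (t : ℕ) →
        (γt t).1 = (γ t.succ).1 ∧ ((γt t).2 : ℕ) = ((γ t.succ).2 : ℕ) - 1) ∧
      IsPath n k (n + k) γt ∧
      (∀ (i : Fin (n + k + 2)) (j : Fin (k + 1)),
        pathExt n (k + 1) (n + k + 1) γ (i, j.succ) =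
          ((pathExt n k (n + k) γt (r.predAbove i, j)).1,
            (pathExt n k (n + k) γt (r.predAbove i, j)).2.succ)) := by
  obtain ⟨h0, hlast, hstep⟩ := hγ
  have hpred : ∀ i : Fin (n+k+2), ((r.predAbove i : Fin (n+k+1)) : ℕ)
      = if (r:ℕ) < (i:ℕ) then (i:ℕ) - 1 else (i:ℕ) := by
    intro i
    unfold Fin.predAbove
    split <;> rename_i h <;> rw [Fin.lt_def] at h <;> simp only [Fin.coe_castSucc] at h
    · rw [if_pos h]; simp [Fin.coe_pred]
    · rw [if_neg h]; simp [Fin.coe_castPred]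
  have hrmax' : ∀ t : Fin (n+k+2), ((γ t).2 : ℕ) = 0 → (t:ℕ) ≤ (r:ℕ) := by
    intro t h
    exact hrmax t (Fin.ext (by simpa using h))
  have hb0aux : ∀ d : ℕ, ∀ i : Fin (n+k+2), (i:ℕ) + d = (r:ℕ) → ((γ i).2 : ℕ) = 0 := by
    intro d
    induction d with
    | zero =>
      intro i hi
      have : i = r.castSucc := Fin.ext (by simpa using hi)
      rw [this]
      simpa using congrArg Fin.val hr0
    | succ d ih =>
      intro i hi
      have hlt : (i:ℕ) < n + k + 1 := by have := r.isLt; omega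
      have hnext : ((γ (⟨(i:ℕ), hlt⟩ : Fin (n+k+1)).succ).2 : ℕ) = 0 :=
        ih _ (by simp [Fin.val_succ]; omega)
      have hcs : (⟨(i:ℕ), hlt⟩ : Fin (n+k+1)).castSucc = i := Fin.ext rfl
      rcases hstep ⟨(i:ℕ), hlt⟩ with ⟨_, h2⟩ | ⟨_, h2⟩
      · rw [hcs] at h2; rw [← h2]; exact hnext
      · rw [hcs] at h2; omega
  have hb0 : ∀ i : Fin (n+k+2), (i:ℕ) ≤ (r:ℕ) → ((γ i).2 : ℕ) = 0 := by
    intro i h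
    exact hb0aux ((r:ℕ) - (i:ℕ)) i (by omega)
  have haAux : ∀ m' : ℕ, ∀ _ : m' ≤ (r:ℕ),
      ((γ ⟨m', by have := r.isLt; omega⟩).1 : ℕ) = m' := by
    intro m'
    induction m' with
    | zero =>
      intro _
      have : (⟨0, by have := r.isLt; omega⟩ : Fin (n+k+2)) = 0 := rfl
      rw [this, h0]
      rfl
    | succ m' ih =>
      intro hm
      have hlt : m' < n + k + 1 := by have := r.isLt; omega
      have hcs : (⟨m', hlt⟩ : Fin (n+k+1)).castSucc
          = (⟨m', by have := r.isLt; omega⟩ : Fin (n+k+2)) := Fin.ext rfl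
      have hsc : (⟨m', hlt⟩ : Fin (n+k+1)).succ
          = (⟨m'+1, by have := r.isLt; omega⟩ : Fin (n+k+2)) := Fin.ext rfl
      have hbc : ((γ (⟨m', hlt⟩ : Fin (n+k+1)).castSucc).2 : ℕ) = 0 :=
        hb0 _ (by simpa using Nat.le_of_succ_le hm)
      have hbs : ((γ (⟨m', hlt⟩ : Fin (n+k+1)).succ).2 : ℕ) = 0 :=
        hb0 _ (by rw [hsc]; simpa using hm)
      rcases hstep ⟨m', hlt⟩ with ⟨h1, _⟩ | ⟨_, h2⟩
      · rw [hsc] at h1; rw [hcs] at h1; rw [h1, ih (Nat.le_of_succ_le hm)]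
      · omega
  have ha : ∀ i : Fin (n+k+2), (i:ℕ) ≤ (r:ℕ) → ((γ i).1 : ℕ) = (i:ℕ) := by
    intro i h
    exact haAux i.1 h
  have hbpos : ∀ i : Fin (n+k+2), (r:ℕ) < (i:ℕ) → 1 ≤ ((γ i).2 : ℕ) := by
    intro i h
    by_contra hc
    have := hrmax' i (by omega)
    omega
  have hr1 : ((γ r.succ).2 : ℕ) = 1 ∧ ((γ r.succ).1 : ℕ) = (r:ℕ) := by
    have hb := hb0 r.castSucc (by simp)
    have hpos := hbpos r.succ (by simp [Fin.val_succ])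
    rcases hstep r with ⟨_, h2⟩ | ⟨h1, h2⟩
    · exfalso
      have := congrArg Fin.val h2
      omega
    · refine ⟨by omega, ?_⟩
      rw [h1]
      exact ha r.castSucc (by simp)
  refine ⟨fun t => if h : (t:ℕ) ≤ (r:ℕ) then ((γ t.castSucc).1, 0)
      else ((γ t.succ).1, ⟨((γ t.succ).2 : ℕ) - 1, by have := (γ t.succ).2.isLt; omega⟩),
    ?_, ?_, ?_, ?_⟩
  · intro t ht
    simp only [dif_pos ht]
    refine ⟨by rw [ha t.castSucc (by simpa using ht)]; simp, by trivial⟩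
  · intro t ht
    simp only [dif_neg (by omega : ¬ (t:ℕ) ≤ (r:ℕ))]
    exact ⟨by trivial, by trivial⟩
  · refine ⟨?_, ?_, ?_⟩
    · simp only [dif_pos (by simp : ((0 : Fin (n+k+1)):ℕ) ≤ (r:ℕ))]
      rw [Fin.castSucc_zero, h0]
    · by_cases hc : n + k ≤ (r:ℕ)
      · simp only [dif_pos (by simpa using hc : ((Fin.last (n+k)):ℕ) ≤ (r:ℕ))]
        have h1 := ha (Fin.last (n+k)).castSucc (by simpa using hc)
        have h2 := (γ (Fin.last (n+k)).castSucc).1.isLt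
        simp only [Fin.coe_castSucc, Fin.val_last] at h1
        have hk : k = 0 := by omega
        subst hk
        refine Prod.ext (Fin.ext ?_) (Fin.ext ?_)
        · simpa using h1
        · simp
      · simp only [dif_neg (by simpa using hc : ¬ ((Fin.last (n+k)):ℕ) ≤ (r:ℕ))]
        simp only [Fin.succ_last, hlast]
        refine Prod.ext rfl (Fin.ext ?_)
        simp
    · intro i
      by_cases hc1 : (i:ℕ) + 1 ≤ (r:ℕ)
      · simp only [dif_pos (show ((i.succ : Fin (n+k+1)):ℕ) ≤ (r:ℕ) by simpa using hc1),
          dif_pos (show ((i.castSucc : Fin (n+k+1)):ℕ) ≤ (r:ℕ) by simp; omega)]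
        left
        refine ⟨?_, by trivial⟩
        rw [ha i.succ.castSucc (by simpa using hc1),
          ha i.castSucc.castSucc (by simp; omega)]
        simp
      · by_cases hc2 : (i:ℕ) ≤ (r:ℕ)
        · -- i = r
          have hir : (i:ℕ) = (r:ℕ) := by omega
          simp only [dif_pos (show ((i.castSucc : Fin (n+k+1)):ℕ) ≤ (r:ℕ) by simpa using hc2),
            dif_neg (show ¬ ((i.succ : Fin (n+k+1)):ℕ) ≤ (r:ℕ) by simp; omega)]
          have hidx : i.succ.castSucc = r.succ := Fin.ext (by simp [Fin.val_succ, hir])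
          have hac := ha i.castSucc.castSucc (by simp; omega)
          simp only [Fin.coe_castSucc] at hac
          rcases hstep i.succ with ⟨h1, h2⟩ | ⟨h1, h2⟩
          · left
            constructor
            · rw [h1, hidx, hr1.2, hac]; omega
            · refine Fin.ext ?_
              have h2v := congrArg Fin.val h2
              rw [hidx] at h2v
              simp only [hr1.1] at h2v
              simp [h2v]
          · right
            constructor
            · refine Fin.ext ?_
              rw [h1, hidx, hr1.2, hac]; omega
            · have h2v := h2
              rw [hidx] at h2v
              simp [h2v, hr1.1]
        · -- r < i
          simp only [dif_neg (show ¬ ((i.castSucc : Fin (n+k+1)):ℕ) ≤ (r:ℕ) by simpa using hc2),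
            dif_neg (show ¬ ((i.succ : Fin (n+k+1)):ℕ) ≤ (r:ℕ) by simp; omega)]
          have hidx : i.succ.castSucc = i.castSucc.succ := (Fin.succ_castSucc i).symm
          have hb1 : 1 ≤ ((γ i.castSucc.succ).2 : ℕ) :=
            hbpos _ (by simp [Fin.val_succ]; omega)
          have hb2 : 1 ≤ ((γ i.succ.succ).2 : ℕ) :=
            hbpos _ (by simp [Fin.val_succ]; omega)
          rcases hstep i.succ with ⟨h1, h2⟩ | ⟨h1, h2⟩
          · left
            constructor
            · rw [h1, hidx]
            · refine Fin.ext ?_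
              have h2v := congrArg Fin.val h2
              rw [hidx] at h2v
              simp [h2v]
          · right
            constructor
            · refine Fin.ext ?_
              have h1v := congrArg Fin.val h1
              rw [hidx] at h1v
              simpa using h1v
            · rw [hidx] at h2
              show ((γ i.succ.succ).2 : ℕ) - 1 = ((γ i.castSucc.succ).2 : ℕ) - 1 + 1
              omega
  · intro i j
    simp only [pathExt]
    have hp := hpred i
    by_cases hc1 : (i:ℕ) ≤ (r:ℕ)
    · rw [if_neg (by omega)] at hp
      have hple : ((r.predAbove i : Fin (n+k+1)):ℕ) ≤ (r:ℕ) := by omega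
      simp only [dif_pos hple]
      have hcs : (r.predAbove i).castSucc = i := Fin.ext (by simpa using hp)
      rw [hcs]
      refine Prod.ext rfl (Fin.ext ?_)
      have hb := hb0 i hc1
      simp [Fin.val_succ, hb]
    · by_cases hc2 : (i:ℕ) = (r:ℕ) + 1
      · rw [if_pos (by omega)] at hp
        have hple : ((r.predAbove i : Fin (n+k+1)):ℕ) ≤ (r:ℕ) := by omega
        simp only [dif_pos hple]
        have hir : i = r.succ := Fin.ext (by simp [Fin.val_succ, hc2])
        have hac := ha (r.predAbove i).castSucc (by simp; omega)
        simp only [Fin.coe_castSucc] at hac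
        have hL : ((γ i).1 : ℕ) = (r:ℕ) := by rw [hir]; exact hr1.2
        have hbv : ((γ i).2 : ℕ) = 1 := by rw [hir]; exact hr1.1
        refine Prod.ext (Fin.ext ?_) (Fin.ext ?_)
        · rw [hL, hac, hp]
          omega
        · simp only [Fin.val_succ]
          show max ((γ i).2 : ℕ) ((j:ℕ)+1) = max ((0 : Fin (k+1)) : ℕ) (j:ℕ) + 1
          simp only [Fin.val_zero]
          omega
      · rw [if_pos (by omega)] at hp
        have hpgt : (r:ℕ) < ((r.predAbove i : Fin (n+k+1)):ℕ) := by omega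
        simp only [dif_neg (by omega : ¬ ((r.predAbove i : Fin (n+k+1)):ℕ) ≤ (r:ℕ))]
        have hsc : (r.predAbove i).succ = i := Fin.ext (by simp [Fin.val_succ]; omega)
        simp only [hsc]
        refine Prod.ext rfl (Fin.ext ?_)
        have hb := hbpos i (by omega)
        simp only [Fin.val_succ]
        have := (γ i).2.isLt
        have := j.isLt
        show max ((γ i).2 : ℕ) ((j:ℕ)+1) = max (((γ i).2 : ℕ) - 1) (j:ℕ) + 1
        omega
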